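/- If V* is the value process of a general discrete-time Dynkin game with payoffs X, Y, Z and (τ*_t, σ*_t) are optimal stopping times, then with L = X ∧ Z and U = Y ∨ Z: (i) L_t ≤ V*_t ≤ U_t; (ii) V*_t = L_t on {τ*_t = t} and V*_t = U_t on {σ*_t = t}; (iii) L_t ≤ E[V*_{t+1}|F_t] ≤ U_t on {τ*_t ∧ σ*_t > t}. -/

import Mathlib

open MeasureTheory Filter Set

/-- If `V*` is the value process of a general discrete-time Dynkin game with payoffs
`X, Y, Z` and `(τ*_t, σ*_t)` are optimal stopping times (satisfying the Nash equilibrium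
characterization of the one-period embedded game), then with `L = X ∧ Z`, `U = Y ∨ Z`
and `P_t = E[V*_{t+1} | ℱ t]`:
(i) `L_t ≤ V*_t ≤ U_t`;
(ii) `V*_t = L_t` on `{τ*_t = t}` and `V*_t = U_t` on `{σ*_t = t}`;
(iii) `L_t ≤ P_t ≤ U_t` on `{τ*_t ∧ σ*_t > t}`. -/
theorem stmt6 {Ω : Type*} {m0 : MeasurableSpace Ω} (μ : Measure Ω) [IsProbabilityMeasure μ]
    (ℱ : Filtration ℕ m0) (T : ℕ)
    (X Y Z Vs : ℕ → Ω → ℝ)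
    (hXa : Adapted ℱ X) (hYa : Adapted ℱ Y) (hZa : Adapted ℱ Z)
    (hXi : ∀ s, Integrable (X s) μ) (hYi : ∀ s, Integrable (Y s) μ)
    (hZi : ∀ s, Integrable (Z s) μ)
    (htermX : ∀ ω, X T ω = Z T ω) (htermY : ∀ ω, Y T ω = Z T ω)
    (t : ℕ) (ht : t ≤ T)
    (τs σs : Ω → ℕ)
    (hτst : IsStoppingTime ℱ (fun ω => (τs ω : WithTop ℕ))) (hσst : IsStoppingTime ℱ (fun ω => (σs ω : WithTop ℕ)))
    (hτr : ∀ ω, τs ω ∈ Set.Icc t T) (hσr : ∀ ω, σs ω ∈ Set.Icc t T)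
    (P : Ω → ℝ) (hP : P = μ[Vs (t + 1) | ℱ t])
    -- the Nash equilibrium characterization of the one-period embedded game:
    (hchar : ∀ᵐ ω ∂μ,
      (τs ω = t ∧ σs ω = t →
        Y t ω ≤ Vs t ω ∧ Vs t ω = Z t ω ∧ Z t ω ≤ X t ω) ∧
      (τs ω = t ∧ t < σs ω →
        P ω ≤ Vs t ω ∧ Vs t ω = X t ω ∧ X t ω ≤ Z t ω) ∧
      (t < τs ω ∧ σs ω = t →
        Z t ω ≤ Vs t ω ∧ Vs t ω = Y t ω ∧ Y t ω ≤ P ω) ∧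
      (t < τs ω ∧ t < σs ω →
        X t ω ≤ Vs t ω ∧ Vs t ω = P ω ∧ P ω ≤ Y t ω)) :
    ∀ᵐ ω ∂μ,
      (min (X t ω) (Z t ω) ≤ Vs t ω ∧ Vs t ω ≤ max (Y t ω) (Z t ω)) ∧
      (τs ω = t → Vs t ω = min (X t ω) (Z t ω)) ∧
      (σs ω = t → Vs t ω = max (Y t ω) (Z t ω)) ∧
      (t < τs ω ∧ t < σs ω →
        min (X t ω) (Z t ω) ≤ P ω ∧ P ω ≤ max (Y t ω) (Z t ω)) := by
  filter_upwards [hchar] with ω h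
  obtain ⟨h1, h2, h3, h4⟩ := h
  have hτ : τs ω = t ∨ t < τs ω := ((hτr ω).1.eq_or_lt).imp Eq.symm id
  have hσ : σs ω = t ∨ t < σs ω := ((hσr ω).1.eq_or_lt).imp Eq.symm id
  rcases hτ with hτ | hτ <;> rcases hσ with hσ | hσ
  · obtain ⟨hYV, hVZ, hZX⟩ := h1 ⟨hτ, hσ⟩
    have hmin : min (X t ω) (Z t ω) = Z t ω := min_eq_right hZX
    have hmax : max (Y t ω) (Z t ω) = Z t ω := max_eq_right (hVZ ▸ hYV)
    refine ⟨⟨?_, ?_⟩, fun _ => ?_, fun _ => ?_, fun hlt => absurd hlt.1 (by omega)⟩ <;>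
      simp [hmin, hmax, hVZ]
  · obtain ⟨hPV, hVX, hXZ⟩ := h2 ⟨hτ, hσ⟩
    have hmin : min (X t ω) (Z t ω) = X t ω := min_eq_left hXZ
    refine ⟨⟨le_of_eq (hmin.trans hVX.symm), hVX ▸ hXZ.trans (le_max_right _ _)⟩,
      fun _ => hVX.trans hmin.symm, fun h => absurd h (by omega),
      fun hlt => absurd hlt.1 (by omega)⟩
  · obtain ⟨hZV, hVY, hYP⟩ := h3 ⟨hτ, hσ⟩
    have hmax : max (Y t ω) (Z t ω) = Y t ω := max_eq_left (hVY ▸ hZV)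
    refine ⟨⟨(min_le_right _ _).trans hZV, le_of_eq (hVY.trans hmax.symm)⟩,
      fun h => absurd h (by omega), fun _ => hVY.trans hmax.symm,
      fun hlt => absurd hlt.2 (by omega)⟩
  · obtain ⟨hXV, hVP, hPY⟩ := h4 ⟨hτ, hσ⟩
    refine ⟨⟨(min_le_left _ _).trans hXV, hVP ▸ hPY.trans (le_max_left _ _)⟩,
      fun h => absurd h (by omega), fun h => absurd h (by omega),
      fun _ => ⟨(min_le_left _ _).trans (hVP ▸ hXV), hPY.trans (le_max_left _ _)⟩⟩
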